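/- The MCRE operator Ẑ^π defined by (Ẑ^π Q)(s,a) = (1-υ)(T̂^π Q)(s,a) + υ(Ĥ^π Q)(s,a) - γ I^π(s,a) satisfies ‖Ẑ^π Q₁ - Ẑ^π Q₂‖_∞ ≤ (γ + υγ - υγ²) ‖Q₁ - Q₂‖_∞, and since γ + υγ - υγ² < 1, Ẑ^π is a contraction and possesses a unique fixed point. -/
import Mathlib

/-- The empirical Bellman operator. -/
def TBell {S A : Type*} [Fintype S] (P : S → A → S → ℝ) (r : S → A → ℝ) (γ : ℝ)
    (π : S → A) (Q : S → A → ℝ) : S → A → ℝ :=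
  fun s a => r s a + γ * ∑ s', P s a s' * Q s' (π s')

/-- The empirical TD Bellman operator. -/
def Hop {S A : Type*} [Fintype S] (P : S → A → S → ℝ) (r : S → A → ℝ) (γ : ℝ)
    (π : S → A) (Q : S → A → ℝ) : S → A → ℝ :=
  fun s a => r s a + γ * ∑ s', P s a s' *
    (Q s' (π s') - (r s a + γ * Q s' (π s') - Q s (π s)))

/-- The MCRE operator. -/
def Zop {S A : Type*} [Fintype S] (P : S → A → S → ℝ) (r : S → A → ℝ) (γ υ : ℝ)
    (I : S → A → ℝ) (π : S → A) (Q : S → A → ℝ) : S → A → ℝ :=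
  fun s a => (1 - υ) * TBell P r γ π Q s a + υ * Hop P r γ π Q s a - γ * I s a

/-- The MCRE operator is a `(γ + υγ - υγ²)`-contraction in sup norm, hence has a
unique fixed point. -/
theorem Zop_contraction_unique_fixedPoint
    {S A : Type*} [Fintype S] [Fintype A] [Nonempty S] [Nonempty A]
    (P : S → A → S → ℝ) (hP0 : ∀ s a s', 0 ≤ P s a s')
    (hP1 : ∀ s a, ∑ s', P s a s' = 1)
    (r : S → A → ℝ) (γ υ : ℝ) (hγ0 : 0 ≤ γ) (hγ1 : γ < 1)
    (hυ0 : 0 ≤ υ) (hυ1 : υ ≤ 1) (I : S → A → ℝ) (π : S → A) :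
    (∀ Q₁ Q₂ : S → A → ℝ,
      dist (Zop P r γ υ I π Q₁) (Zop P r γ υ I π Q₂) ≤ (γ + υ * γ - υ * γ ^ 2) * dist Q₁ Q₂) ∧
    ∃! Qstar : S → A → ℝ, Zop P r γ υ I π Qstar = Qstar := by
  set K : ℝ := γ + υ * γ - υ * γ ^ 2 with hK
  have hK0 : 0 ≤ K := by nlinarith
  have hυγ : υ * γ < 1 := by nlinarith
  have hK1 : K < 1 := by
    rw [hK]
    nlinarith [mul_pos (by linarith : (0:ℝ) < 1 - γ) (by linarith : (0:ℝ) < 1 - υ * γ)]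
  have hZ : ∀ (Q : S → A → ℝ) (s : S) (a : A),
      Zop P r γ υ I π Q s a = (1 - υ) * (r s a + γ * ∑ s', P s a s' * Q s' (π s'))
        + υ * (r s a + γ * ((1 - γ) * (∑ s', P s a s' * Q s' (π s')) - r s a + Q s (π s)))
        - γ * I s a := by
    intro Q s a
    have hsum : ∑ s', P s a s' * (Q s' (π s') - (r s a + γ * Q s' (π s') - Q s (π s)))
        = (1 - γ) * (∑ s', P s a s' * Q s' (π s')) - r s a + Q s (π s) := by
      have h1 : ∀ s' ∈ Finset.univ,
          P s a s' * (Q s' (π s') - (r s a + γ * Q s' (π s') - Q s (π s)))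
          = (1 - γ) * (P s a s' * Q s' (π s')) - P s a s' * r s a + P s a s' * Q s (π s) :=
        fun s' _ => by ring
      rw [Finset.sum_congr rfl h1, Finset.sum_add_distrib, Finset.sum_sub_distrib,
        ← Finset.mul_sum, ← Finset.sum_mul, ← Finset.sum_mul, hP1, one_mul, one_mul]
    simp only [Zop, TBell, Hop, hsum]
  have hmain : ∀ Q₁ Q₂ : S → A → ℝ,
      dist (Zop P r γ υ I π Q₁) (Zop P r γ υ I π Q₂) ≤ K * dist Q₁ Q₂ := by
    intro Q₁ Q₂
    have hD0 : (0:ℝ) ≤ dist Q₁ Q₂ := dist_nonneg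
    have hΔ : ∀ s', |Q₁ s' (π s') - Q₂ s' (π s')| ≤ dist Q₁ Q₂ := by
      intro s'
      rw [← Real.dist_eq]
      exact le_trans (dist_le_pi_dist (Q₁ s') (Q₂ s') (π s')) (dist_le_pi_dist Q₁ Q₂ s')
    rw [dist_pi_le_iff (mul_nonneg hK0 hD0)]
    intro s
    rw [dist_pi_le_iff (mul_nonneg hK0 hD0)]
    intro a
    rw [Real.dist_eq]
    have hT : |∑ s', P s a s' * (Q₁ s' (π s') - Q₂ s' (π s'))| ≤ dist Q₁ Q₂ := by
      calc |∑ s', P s a s' * (Q₁ s' (π s') - Q₂ s' (π s'))|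
          ≤ ∑ s', |P s a s' * (Q₁ s' (π s') - Q₂ s' (π s'))| :=
            Finset.abs_sum_le_sum_abs _ _
        _ ≤ ∑ s', P s a s' * dist Q₁ Q₂ := by
            refine Finset.sum_le_sum fun s' _ => ?_
            rw [abs_mul, abs_of_nonneg (hP0 s a s')]
            exact mul_le_mul_of_nonneg_left (hΔ s') (hP0 s a s')
        _ = dist Q₁ Q₂ := by rw [← Finset.sum_mul, hP1, one_mul]
    have hdiff : Zop P r γ υ I π Q₁ s a - Zop P r γ υ I π Q₂ s a
        = γ * (1 - υ * γ) * (∑ s', P s a s' * (Q₁ s' (π s') - Q₂ s' (π s')))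
          + υ * γ * (Q₁ s (π s) - Q₂ s (π s)) := by
      rw [hZ, hZ]
      rw [show (∑ s', P s a s' * (Q₁ s' (π s') - Q₂ s' (π s')))
          = (∑ s', P s a s' * Q₁ s' (π s')) - ∑ s', P s a s' * Q₂ s' (π s') by
        rw [← Finset.sum_sub_distrib]; exact Finset.sum_congr rfl fun s' _ => by ring]
      ring
    rw [hdiff]
    have h1 : 0 ≤ 1 - υ * γ := by nlinarith
    calc |γ * (1 - υ * γ) * (∑ s', P s a s' * (Q₁ s' (π s') - Q₂ s' (π s')))
          + υ * γ * (Q₁ s (π s) - Q₂ s (π s))|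
        ≤ |γ * (1 - υ * γ) * (∑ s', P s a s' * (Q₁ s' (π s') - Q₂ s' (π s')))|
          + |υ * γ * (Q₁ s (π s) - Q₂ s (π s))| := abs_add_le _ _
      _ ≤ γ * (1 - υ * γ) * dist Q₁ Q₂ + υ * γ * dist Q₁ Q₂ := by
          gcongr
          · rw [abs_mul, abs_of_nonneg (by positivity : (0:ℝ) ≤ γ * (1 - υ * γ))]
            exact mul_le_mul_of_nonneg_left hT (by positivity)
          · rw [abs_mul, abs_of_nonneg (by positivity : (0:ℝ) ≤ υ * γ)]
            exact mul_le_mul_of_nonneg_left (hΔ s) (by positivity)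
      _ = K * dist Q₁ Q₂ := by rw [hK]; ring
  refine ⟨hmain, ?_⟩
  have hCW : ContractingWith ⟨K, hK0⟩ (Zop P r γ υ I π) := by
    refine ⟨by exact_mod_cast hK1, LipschitzWith.of_dist_le_mul fun Q₁ Q₂ => ?_⟩
    exact hmain Q₁ Q₂
  refine ⟨hCW.fixedPoint (Zop P r γ υ I π), hCW.fixedPoint_isFixedPt, fun Q hQ => ?_⟩
  exact hCW.fixedPoint_unique hQ
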